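/- Let G be a connected undirected graph that is not bipartite, with incidence matrix B (of size n × m, where b_{il} = 1 if node i is an endpoint of edge l, else 0). Then for every r > 0 the linear system Bw = re has a solution w ≠ 0; hence G is arbitrarily regularizable. -/

import Mathlib

open Matrix BigOperators

open Classical in
/-- An undirected graph is arbitrarily regularizable if there is a real weighting of its
edges, not identically zero, and `r > 0`, such that `B w = r e` where `B` is the
incidence matrix. -/
def ArbReg {V : Type*} [Fintype V] [DecidableEq V] (G : SimpleGraph V) : Prop :=
  ∃ (w : Sym2 V → ℝ) (r : ℝ), 0 < r ∧ w ≠ 0 ∧ (∀ e ∉ G.edgeSet, w e = 0) ∧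
    G.incMatrix ℝ *ᵥ w = fun _ => r

/-- `U` together with its complement is a bipartition of `G`. -/
def IsBipartition {V : Type*} (G : SimpleGraph V) (U : Set V) : Prop :=
  ∀ ⦃u v⦄, G.Adj u v → ((u ∈ U) ↔ (v ∉ U))

/-- Alternating ±1 weight along a walk. -/
def walkWeight {V : Type*} [DecidableEq V] {G : SimpleGraph V} :
    ∀ {u v : V}, G.Walk u v → Sym2 V → ℝ
  | _, _, SimpleGraph.Walk.nil => 0
  | _, _, @SimpleGraph.Walk.cons _ _ a b _ _ p =>
      fun e => (if e = s(a, b) then 1 else 0) - walkWeight p e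

lemma walkWeight_support {V : Type*} [DecidableEq V] {G : SimpleGraph V}
    {u v : V} (p : G.Walk u v) {e : Sym2 V} (he : e ∉ G.edgeSet) :
    walkWeight p e = 0 := by
  induction p with
  | nil => rfl
  | cons h p ih =>
      simp only [walkWeight, ih]
      rw [if_neg, sub_zero]
      rintro rfl
      exact he h

open Classical in
lemma incMatrix_mulVec_single {V : Type*} [Fintype V] [DecidableEq V] {G : SimpleGraph V}
    {a b : V} (h : G.Adj a b) :
    G.incMatrix ℝ *ᵥ (fun e => if e = s(a, b) then (1:ℝ) else 0) =
      fun x => (if x = a then 1 else 0) + (if x = b then 1 else 0) := by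
  funext x
  simp only [Matrix.mulVec, dotProduct, mul_ite, mul_one, mul_zero,
    Finset.sum_ite_eq' Finset.univ, Finset.mem_univ, if_true]
  rw [SimpleGraph.incMatrix_apply]
  unfold Set.indicator
  by_cases hx : s(a,b) ∈ G.incidenceSet x
  · rw [if_pos hx]
    rcases Sym2.mem_iff.mp hx.2 with rfl | rfl
    · simp [h.ne]
    · simp [h.ne']
  · rw [if_neg hx]
    rw [if_neg, if_neg, add_zero]
    · rintro rfl; exact hx ⟨G.mem_edgeSet.mpr h, Sym2.mem_mk_right a x⟩
    · rintro rfl; exact hx ⟨G.mem_edgeSet.mpr h, Sym2.mem_mk_left x b⟩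

open Classical in
lemma incMatrix_mulVec_walkWeight {V : Type*} [Fintype V] [DecidableEq V] {G : SimpleGraph V}
    {u v : V} (p : G.Walk u v) :
    G.incMatrix ℝ *ᵥ walkWeight p =
      fun x => (if x = u then (1:ℝ) else 0) - (-1) ^ p.length * (if x = v then 1 else 0) := by
  induction p with
  | nil => funext x; simp [walkWeight, Matrix.mulVec]
  | @cons a b c h p ih =>
      have hw : walkWeight (SimpleGraph.Walk.cons h p) =
          (fun e => if e = s(a, b) then (1:ℝ) else 0) - walkWeight p := rfl
      rw [hw, Matrix.mulVec_sub, incMatrix_mulVec_single h, ih]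
      funext x
      simp only [Pi.sub_apply, SimpleGraph.Walk.length_cons, pow_succ]
      ring

lemma exists_odd_closed_walk {V : Type*} {G : SimpleGraph V}
    (hc : G.Connected) (hnb : ¬ ∃ U : Set V, IsBipartition G U) (u : V) :
    ∃ p : G.Walk u u, Odd p.length := by
  classical
  have hodd : ∃ u0 : V, ∃ p : G.Walk u0 u0, Odd p.length := by
    by_contra hno
    push_neg at hno
    obtain ⟨u0⟩ := hc.nonempty
    apply hnb
    refine ⟨{v | ∃ p : G.Walk u0 v, Even p.length}, ?_⟩
    intro a b hab
    constructor
    · rintro ⟨p, hp⟩ ⟨q, hq⟩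
      have h2 := hno u0 ((p.append (SimpleGraph.Walk.cons hab SimpleGraph.Walk.nil)).append
        q.reverse)
      rw [Nat.not_odd_iff_even] at h2
      simp only [SimpleGraph.Walk.length_append, SimpleGraph.Walk.length_cons,
        SimpleGraph.Walk.length_nil, SimpleGraph.Walk.length_reverse] at h2
      obtain ⟨k, hk⟩ := hp; obtain ⟨l, hl⟩ := hq; obtain ⟨m, hm⟩ := h2; omega
    · intro hb
      obtain ⟨q⟩ := hc u0 b
      have hq : Odd q.length := by
        rcases Nat.even_or_odd q.length with he | ho
        · exact absurd ⟨q, he⟩ hb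
        · exact ho
      refine ⟨q.append (SimpleGraph.Walk.cons hab.symm SimpleGraph.Walk.nil), ?_⟩
      obtain ⟨k, hk⟩ := hq
      simp only [SimpleGraph.Walk.length_append, SimpleGraph.Walk.length_cons,
        SimpleGraph.Walk.length_nil]
      exact ⟨k + 1, by omega⟩
  obtain ⟨u0, p0, hp0⟩ := hodd
  obtain ⟨q⟩ := hc u u0
  refine ⟨(q.append p0).append q.reverse, ?_⟩
  simp only [SimpleGraph.Walk.length_append, SimpleGraph.Walk.length_reverse]
  obtain ⟨k, hk⟩ := hp0
  exact ⟨q.length + k, by omega⟩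

open Classical in
/-- A connected non-bipartite graph: for every `r > 0` the system `B w = r e` has a
solution `w ≠ 0`; hence the graph is arbitrarily regularizable. -/
theorem connected_not_bipartite_arbitrarily_regularizable
    {V : Type*} [Fintype V] [DecidableEq V] (G : SimpleGraph V)
    (hc : G.Connected) (hnb : ¬ ∃ U : Set V, IsBipartition G U) :
    (∀ r : ℝ, 0 < r → ∃ w : Sym2 V → ℝ, w ≠ 0 ∧ (∀ e ∉ G.edgeSet, w e = 0) ∧
      G.incMatrix ℝ *ᵥ w = fun _ => r) ∧ ArbReg G := by
  classical
  have key : ∀ r : ℝ, 0 < r → ∃ w : Sym2 V → ℝ, w ≠ 0 ∧ (∀ e ∉ G.edgeSet, w e = 0) ∧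
      G.incMatrix ℝ *ᵥ w = fun _ => r := by
    intro r hr
    choose p hp using exists_odd_closed_walk hc hnb
    set w : Sym2 V → ℝ := (r/2) • ∑ u : V, walkWeight (p u) with hwdef
    have hsupp : ∀ e ∉ G.edgeSet, w e = 0 := by
      intro e he
      simp only [hwdef, Pi.smul_apply, Finset.sum_apply, smul_eq_mul]
      rw [Finset.sum_congr rfl (fun u _ => walkWeight_support (p u) he)]
      simp
    have hmul : G.incMatrix ℝ *ᵥ w = fun _ => r := by
      rw [hwdef, Matrix.mulVec_smul]
      have hs : G.incMatrix ℝ *ᵥ (∑ u : V, walkWeight (p u)) =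
          ∑ u : V, G.incMatrix ℝ *ᵥ walkWeight (p u) := by
        funext x
        simp only [Matrix.mulVec, dotProduct, Finset.sum_apply, Finset.mul_sum]
        exact Finset.sum_comm
      rw [hs]
      funext x
      have hterm : ∀ u : V, (G.incMatrix ℝ *ᵥ walkWeight (p u)) x =
          2 * (if x = u then 1 else 0) := by
        intro u
        rw [incMatrix_mulVec_walkWeight]
        rw [Odd.neg_one_pow (hp u)]
        ring
      simp only [Pi.smul_apply, Finset.sum_apply, smul_eq_mul]
      rw [Finset.sum_congr rfl fun u _ => hterm u, ← Finset.mul_sum,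
        Finset.sum_ite_eq Finset.univ]
      simp only [Finset.mem_univ, if_true]
      ring
    have hw0 : w ≠ 0 := by
      intro h0
      obtain ⟨x0⟩ := hc.nonempty
      have := congrFun hmul x0
      rw [h0, Matrix.mulVec_zero] at this
      exact hr.ne (by simpa using this)
    exact ⟨w, hw0, hsupp, hmul⟩
  refine ⟨key, ?_⟩
  obtain ⟨w, hw0, hsupp, hmul⟩ := key 1 one_pos
  exact ⟨w, 1, one_pos, hw0, hsupp, hmul⟩
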